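/- arXiv:1012.0197 — 8 statements merged into one kernel-verified Lean document; each statement's English description precedes it below -/
import Mathlib

section
/- Let M be a nonnegative m-by-n matrix and W a nonnegative m-by-n weight matrix. For any vectors u ∈ ℝ^m and v ∈ ℝ^n, replacing u and v by their component-wise absolute values does not increase the weighted approximation error: ‖M − |u||v|^T‖_W ≤ ‖M − uv^T‖_W, where |u| denotes the vector of absolute values of entries of u. -/
theorem stmt_2 {m n : ℕ} (M W : Matrix (Fin m) (Fin n) ℝ)
    (hM : ∀ i j, 0 ≤ M i j) (hW : ∀ i j, 0 ≤ W i j) (u : Fin m → ℝ) (v : Fin n → ℝ) :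
    Real.sqrt (∑ i, ∑ j, W i j * (M i j - |u i| * |v j|) ^ 2) ≤
      Real.sqrt (∑ i, ∑ j, W i j * (M i j - u i * v j) ^ 2) := by
  apply Real.sqrt_le_sqrt
  apply Finset.sum_le_sum; intro i _
  apply Finset.sum_le_sum; intro j _
  apply mul_le_mul_of_nonneg_left _ (hW i j)
  have h : |u i| * |v j| = |u i * v j| := (abs_mul _ _).symm
  rw [h]
  nlinarith [hM i j, abs_nonneg (u i * v j), le_abs_self (u i * v j), sq_abs (u i * v j)]
end

section
/- Suppose the weight matrix W has rank one, i.e., W = s t^T for nonnegative vectors s ∈ ℝ^m and t ∈ ℝ^n. Then for any matrices M ∈ ℝ^{m×n}, U ∈ ℝ^{m×r}, V ∈ ℝ^{n×r}, one has ‖M − UV^T‖_W² = ‖M' − U'V'^T‖_F², where M'_{ij} = √(s_i t_j) M_{ij}, U'_{i:} = √(s_i) U_{i:}, and V'_{j:} = √(t_j) V_{j:}. -/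
theorem stmt_3 {m n r : ℕ} (s : Fin m → ℝ) (t : Fin n → ℝ)
    (hs : ∀ i, 0 ≤ s i) (ht : ∀ j, 0 ≤ t j)
    (W : Matrix (Fin m) (Fin n) ℝ) (hW : ∀ i j, W i j = s i * t j)
    (M : Matrix (Fin m) (Fin n) ℝ) (U : Matrix (Fin m) (Fin r) ℝ) (V : Matrix (Fin n) (Fin r) ℝ) :
    (∑ i, ∑ j, W i j * (M i j - ∑ k, U i k * V j k) ^ 2) =
      ∑ i, ∑ j,
        ((Real.sqrt (s i * t j) * M i j) -
          ∑ k, (Real.sqrt (s i) * U i k) * (Real.sqrt (t j) * V j k)) ^ 2 := by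
  refine Finset.sum_congr rfl fun i _ => Finset.sum_congr rfl fun j _ => ?_
  have h1 : Real.sqrt (s i * t j) = Real.sqrt (s i) * Real.sqrt (t j) :=
    Real.sqrt_mul (hs i) _
  have hsum : (∑ k, (Real.sqrt (s i) * U i k) * (Real.sqrt (t j) * V j k)) =
      (Real.sqrt (s i) * Real.sqrt (t j)) * ∑ k, U i k * V j k := by
    rw [Finset.mul_sum]; exact Finset.sum_congr rfl fun k _ => by ring
  rw [h1, hsum, ← mul_sub, mul_pow, mul_pow, Real.sq_sqrt (hs i), Real.sq_sqrt (ht j), hW]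
end

section
/- Let M = [[1, a], [0, 1]] (for any real a) and let the weight matrix be W = [[1, 0], [1, 1]] (zero weight on the (1,2) entry, unit weights elsewhere). Then the infimum over u ∈ ℝ², v ∈ ℝ² of ‖M − uv^T‖_W² equals 0, but there is no pair (u,v) attaining it: every rank-one matrix uv^T satisfies ‖M − uv^T‖_W > 0. -/
/-- Weighted squared error for rank-one approximation of a 2×2 matrix. -/
noncomputable def wsq4 (M W : Matrix (Fin 2) (Fin 2) ℝ) (u v : Fin 2 → ℝ) : ℝ :=
  ∑ i, ∑ j, W i j * (M i j - u i * v j) ^ 2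

theorem stmt_4 (a : ℝ) (M W : Matrix (Fin 2) (Fin 2) ℝ)
    (hM : M = !![1, a; 0, 1]) (hW : W = !![1, 0; 1, 1]) :
    sInf {e : ℝ | ∃ u v : Fin 2 → ℝ, e = wsq4 M W u v} = 0 ∧
    ∀ u v : Fin 2 → ℝ, 0 < wsq4 M W u v := by
  subst hM hW
  have hval : ∀ u v : Fin 2 → ℝ,
      wsq4 !![1, a; 0, 1] !![1, 0; 1, 1] u v =
        (1 - u 0 * v 0) ^ 2 + (u 1 * v 0) ^ 2 + (1 - u 1 * v 1) ^ 2 := by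
    intro u v
    simp [wsq4, Fin.sum_univ_two, Matrix.cons_val_zero, Matrix.cons_val_one,
      Matrix.head_cons]
    ring
  have hpos : ∀ u v : Fin 2 → ℝ, 0 < wsq4 !![1, a; 0, 1] !![1, 0; 1, 1] u v := by
    intro u v
    rw [hval]
    by_contra h
    push_neg at h
    have hA : 1 - u 0 * v 0 = 0 := by
      nlinarith [sq_nonneg (1 - u 0 * v 0), sq_nonneg (u 1 * v 0), sq_nonneg (1 - u 1 * v 1)]
    have hB : u 1 * v 0 = 0 := by
      nlinarith [sq_nonneg (1 - u 0 * v 0), sq_nonneg (u 1 * v 0), sq_nonneg (1 - u 1 * v 1)]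
    have hC : 1 - u 1 * v 1 = 0 := by
      nlinarith [sq_nonneg (1 - u 0 * v 0), sq_nonneg (u 1 * v 0), sq_nonneg (1 - u 1 * v 1)]
    have key : (u 1 * v 0) * (u 0 * v 1) = (u 0 * v 0) * (u 1 * v 1) := by ring
    rw [hB] at key
    nlinarith [key, hA, hC]
  refine ⟨?_, hpos⟩
  set S := {e : ℝ | ∃ u v : Fin 2 → ℝ, e = wsq4 !![1, a; 0, 1] !![1, 0; 1, 1] u v} with hS
  have hne : S.Nonempty := ⟨_, 0, 0, rfl⟩
  have hlb : ∀ x ∈ S, (0:ℝ) ≤ x := by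
    rintro x ⟨u, v, rfl⟩
    exact (hpos u v).le
  have hbdd : BddBelow S := ⟨0, hlb⟩
  apply le_antisymm
  · refine le_of_forall_pos_le_add fun ε hε => ?_
    have hmem : (Real.sqrt ε) ^ 2 ∈ S := by
      refine ⟨![1, Real.sqrt ε], ![1, 1 / Real.sqrt ε], ?_⟩
      have hst : Real.sqrt ε ≠ 0 := by positivity
      rw [hval]
      simp [hst]
    have := csInf_le hbdd hmem
    rw [Real.sq_sqrt hε.le] at this
    linarith
  · exact le_csInf hne hlb
end

section
/- Let M ∈ {0,1}^{m×n} with |E| = Σ_{i,j} M_{ij} nonzero entries, and let W_{ij} = 1 if M_{ij} = 1 and W_{ij} = d ≥ 1 if M_{ij} = 0. Suppose (i,j) is such that M_{ij} = 0 and (u,v) ∈ ℝ^m × ℝ^n satisfies ‖M − uv^T‖_W² ≤ |E|. Then min( max_{1≤k≤n} |u_i v_k|, max_{1≤p≤m} |u_p v_j| ) ≤ (4|E|²/d)^{1/4}. -/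
theorem stmt_6 {m n : ℕ} (M W : Matrix (Fin m) (Fin n) ℝ) (d : ℝ) (hd : 1 ≤ d)
    (hM : ∀ i j, M i j = 0 ∨ M i j = 1)
    (hW : ∀ i j, W i j = if M i j = 1 then 1 else d)
    (E : ℝ) (hE : E = ∑ i, ∑ j, M i j)
    (i : Fin m) (j : Fin n) (hij : M i j = 0)
    (u : Fin m → ℝ) (v : Fin n → ℝ)
    (herr : ∑ i', ∑ j', W i' j' * (M i' j' - u i' * v j') ^ 2 ≤ E) :
    min (⨆ k : Fin n, |u i * v k|) (⨆ p : Fin m, |u p * v j|) ≤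
      (4 * E ^ 2 / d) ^ ((1 : ℝ) / 4) := by
  have hd0 : (0:ℝ) < d := lt_of_lt_of_le one_pos hd
  have hWnn : ∀ p k, 0 ≤ W p k := by
    intro p k; rw [hW]; split <;> linarith
  have hterm : ∀ p k, W p k * (M p k - u p * v k) ^ 2 ≤ E := by
    intro p k
    have h1 : W p k * (M p k - u p * v k) ^ 2
        ≤ ∑ k', W p k' * (M p k' - u p * v k') ^ 2 :=
      Finset.single_le_sum (f := fun k' => W p k' * (M p k' - u p * v k') ^ 2)
        (fun k' _ => mul_nonneg (hWnn p k') (sq_nonneg _)) (Finset.mem_univ k)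
    have h2 : ∑ k', W p k' * (M p k' - u p * v k') ^ 2
        ≤ ∑ p', ∑ k', W p' k' * (M p' k' - u p' * v k') ^ 2 :=
      Finset.single_le_sum (f := fun p' => ∑ k', W p' k' * (M p' k' - u p' * v k') ^ 2)
        (fun p' _ => Finset.sum_nonneg fun k' _ => mul_nonneg (hWnn p' k') (sq_nonneg _))
        (Finset.mem_univ p)
    linarith
  have hE0 : 0 ≤ E := by
    rw [hE]
    refine Finset.sum_nonneg fun p _ => Finset.sum_nonneg fun k _ => ?_
    rcases hM p k with h | h <;> rw [h] <;> norm_num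
  -- bound on |u i * v j|
  have hWij : W i j = d := by rw [hW]; simp [hij]
  have hij2 : (u i * v j) ^ 2 ≤ E / d := by
    have := hterm i j
    rw [hWij, hij] at this
    rw [le_div_iff₀ hd0]
    nlinarith [sq_nonneg (u i * v j)]
  have hijabs : |u i * v j| ≤ Real.sqrt (E / d) := Real.abs_le_sqrt hij2
  -- bound on all entries
  have hall : ∀ p k, |u p * v k| ≤ 2 * Real.sqrt E := by
    intro p k
    rcases hM p k with h | h
    · have hw : W p k = d := by rw [hW]; simp [h]
      have := hterm p k
      rw [hw, h] at this
      have h2 : (u p * v k) ^ 2 ≤ E := by nlinarith [sq_nonneg (u p * v k)]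
      have := Real.abs_le_sqrt h2
      have : Real.sqrt E ≤ 2 * Real.sqrt E := by nlinarith [Real.sqrt_nonneg E]
      linarith [Real.abs_le_sqrt h2]
    · have hw : W p k = 1 := by rw [hW]; simp [h]
      have hE1 : (1:ℝ) ≤ E := by
        rw [hE]
        have h1 : (1:ℝ) = M p k := h.symm
        have h2 : M p k ≤ ∑ k', M p k' :=
          Finset.single_le_sum (fun k' _ => by rcases hM p k' with hh | hh <;> rw [hh] <;> norm_num)
            (Finset.mem_univ k)
        have h3 : ∑ k', M p k' ≤ ∑ p', ∑ k', M p' k' :=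
          Finset.single_le_sum
            (fun p' _ => Finset.sum_nonneg fun k' _ => by
              rcases hM p' k' with hh | hh <;> rw [hh] <;> norm_num)
            (Finset.mem_univ p)
        linarith
      have hs1 : (1:ℝ) ≤ Real.sqrt E := by
        rw [show (1:ℝ) = Real.sqrt 1 by simp]
        exact Real.sqrt_le_sqrt hE1
      have := hterm p k
      rw [hw, h, one_mul] at this
      have habs : |1 - u p * v k| ≤ Real.sqrt E := Real.abs_le_sqrt this
      have := abs_sub_abs_le_abs_sub (u p * v k) 1
      rw [abs_one] at this
      have h4 : |1 - u p * v k| = |u p * v k - 1| := abs_sub_comm _ _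
      linarith
  -- suprema
  set A := ⨆ k : Fin n, |u i * v k| with hA
  set B := ⨆ p : Fin m, |u p * v j| with hB
  have : Nonempty (Fin n) := ⟨j⟩
  have : Nonempty (Fin m) := ⟨i⟩
  obtain ⟨k₀, hk₀⟩ := Finite.exists_max (fun k : Fin n => |u i * v k|)
  obtain ⟨p₀, hp₀⟩ := Finite.exists_max (fun p : Fin m => |u p * v j|)
  have hAle : A ≤ |u i * v k₀| := ciSup_le hk₀
  have hBle : B ≤ |u p₀ * v j| := ciSup_le hp₀
  have hA0 : 0 ≤ A := le_trans (abs_nonneg _) (le_ciSup (f := fun k : Fin n => |u i * v k|) (Set.Finite.bddAbove (Set.finite_range _)) j)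
  have hB0 : 0 ≤ B := le_trans (abs_nonneg _) (le_ciSup (f := fun p : Fin m => |u p * v j|) (Set.Finite.bddAbove (Set.finite_range _)) i)
  have key : A * B ≤ Real.sqrt (4 * E ^ 2 / d) := by
    have h1 : A * B ≤ |u i * v k₀| * |u p₀ * v j| :=
      mul_le_mul hAle hBle hB0 (abs_nonneg _)
    have h2 : |u i * v k₀| * |u p₀ * v j| = |u i * v j| * |u p₀ * v k₀| := by
      rw [← abs_mul, ← abs_mul]; ring_nf
    have h3 : |u i * v j| * |u p₀ * v k₀| ≤ Real.sqrt (E / d) * (2 * Real.sqrt E) :=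
      mul_le_mul hijabs (hall p₀ k₀) (abs_nonneg _) (Real.sqrt_nonneg _)
    have h4 : Real.sqrt (E / d) * (2 * Real.sqrt E) = Real.sqrt (4 * E ^ 2 / d) := by
      rw [show (4 * E ^ 2 / d : ℝ) = (E / d) * (4 * E) by ring, Real.sqrt_mul (by positivity),
        Real.sqrt_mul (by norm_num : (0:ℝ) ≤ 4),
        show Real.sqrt 4 = 2 by
          rw [show (4:ℝ) = 2 ^ 2 by norm_num, Real.sqrt_sq (by norm_num : (0:ℝ) ≤ 2)]]
    calc A * B ≤ |u i * v j| * |u p₀ * v k₀| := h2 ▸ h1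
      _ ≤ Real.sqrt (E / d) * (2 * Real.sqrt E) := h3
      _ = Real.sqrt (4 * E ^ 2 / d) := h4
  have hmin : min A B ≤ Real.sqrt (Real.sqrt (4 * E ^ 2 / d)) := by
    have hmin0 : 0 ≤ min A B := le_min hA0 hB0
    have hsq : (min A B) ^ 2 ≤ Real.sqrt (4 * E ^ 2 / d) := by
      have := mul_le_mul (min_le_left A B) (min_le_right A B) hmin0 hA0
      nlinarith
    have habs := Real.abs_le_sqrt hsq
    rwa [abs_of_nonneg hmin0] at habs
  have hT0 : (0:ℝ) ≤ 4 * E ^ 2 / d := by positivity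
  calc min A B ≤ Real.sqrt (Real.sqrt (4 * E ^ 2 / d)) := hmin
    _ = (4 * E ^ 2 / d) ^ ((1:ℝ)/4) := by
        rw [Real.sqrt_eq_rpow, Real.sqrt_eq_rpow, ← Real.rpow_mul hT0]
        norm_num
end

section
/- Let M ∈ {0,1}^{m×n} be the biadjacency matrix of a bipartite graph G_b, let W ∈ ℝ₊^{m×n} satisfy W_{ij} = 1 whenever M_{ij} = 1, and let 0 < c ≤ 1. Suppose (u,v) ∈ ℝ^m × ℝ^n is such that for every (i,j) with M_{ij} = 0, min( max_k |u_i v_k|, max_p |u_p v_j| ) ≤ c. Let p = |E| − |E*| > 0, where |E| is the number of ones in M and |E*| is the maximum number of entries (i,j) in a combinatorial rectangle I × J ⊆ {1,…,m} × {1,…,n} with M_{ij} = 1 for all (i,j) ∈ I × J (maximum-edge biclique). Then ‖M − uv^T‖_W² > p(1 − 2c). -/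
/-- (I, J) is a biclique of the bipartite graph whose biadjacency matrix is M. -/
def IsBiclique {m n : ℕ} (M : Matrix (Fin m) (Fin n) ℝ)
    (I : Finset (Fin m)) (J : Finset (Fin n)) : Prop :=
  ∀ i ∈ I, ∀ j ∈ J, M i j = 1

theorem stmt_7 {m n : ℕ} (M W : Matrix (Fin m) (Fin n) ℝ)
    (hM : ∀ i j, M i j = 0 ∨ M i j = 1)
    (hWpos : ∀ i j, 0 ≤ W i j) (hW1 : ∀ i j, M i j = 1 → W i j = 1)
    (c : ℝ) (hc0 : 0 < c) (hc1 : c ≤ 1)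
    (E : ℝ) (hE : E = ∑ i, ∑ j, M i j)
    (Estar : ℕ)
    (hEstar_ex : ∃ (I : Finset (Fin m)) (J : Finset (Fin n)),
      IsBiclique M I J ∧ I.card * J.card = Estar)
    (hEstar_max : ∀ (I : Finset (Fin m)) (J : Finset (Fin n)),
      IsBiclique M I J → I.card * J.card ≤ Estar)
    (p : ℝ) (hp : p = E - Estar) (hppos : 0 < p)
    (u : Fin m → ℝ) (v : Fin n → ℝ)
    (hsmall : ∀ i j, M i j = 0 →
      min (⨆ k : Fin n, |u i * v k|) (⨆ q : Fin m, |u q * v j|) ≤ c) :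
    p * (1 - 2 * c) < ∑ i, ∑ j, W i j * (M i j - u i * v j) ^ 2 := by
  classical
  set I : Finset (Fin m) := Finset.univ.filter (fun i => ∃ j, c < |u i * v j|) with hI
  set J : Finset (Fin n) := Finset.univ.filter (fun j => ∃ i, c < |u i * v j|) with hJ
  have hbic : IsBiclique M I J := by
    intro i hi j hj
    rcases hM i j with h0 | h1
    · exfalso
      simp only [hI, Finset.mem_filter, Finset.mem_univ, true_and] at hi
      simp only [hJ, Finset.mem_filter, Finset.mem_univ, true_and] at hj
      obtain ⟨j', hj'⟩ := hi
      obtain ⟨i', hi'⟩ := hj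
      have h1 : c < ⨆ k : Fin n, |u i * v k| :=
        lt_of_lt_of_le hj' (le_ciSup (f := fun k => |u i * v k|) (Finite.bddAbove_range _) j')
      have h2 : c < ⨆ q : Fin m, |u q * v j| :=
        lt_of_lt_of_le hi' (le_ciSup (f := fun q => |u q * v j|) (Finite.bddAbove_range _) i')
      have h3 := hsmall i j h0
      have h4 := lt_min h1 h2
      linarith
    · exact h1
  have hcard : I.card * J.card ≤ Estar := hEstar_max I J hbic
  set T : Finset (Fin m × Fin n) := Finset.univ.filter (fun q => M q.1 q.2 = 1) with hT
  have hE' : E = T.card := by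
    rw [hE, show (∑ i, ∑ j, M i j) = ∑ q ∈ Finset.univ ×ˢ Finset.univ, M q.1 q.2 from
        (Finset.sum_product' (f := fun i j => M i j) Finset.univ Finset.univ).symm, Finset.univ_product_univ,
      ← Finset.sum_filter_add_sum_filter_not Finset.univ (fun q => M q.1 q.2 = 1)]
    have h1 : ∑ q ∈ Finset.univ.filter (fun q : Fin m × Fin n => M q.1 q.2 = 1), M q.1 q.2
        = (T.card : ℝ) := by
      rw [Finset.sum_congr rfl (fun q hq => (Finset.mem_filter.mp hq).2)]
      simp [hT]
    have h2 : ∑ q ∈ Finset.univ.filter (fun q : Fin m × Fin n => ¬ M q.1 q.2 = 1), M q.1 q.2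
        = 0 := by
      apply Finset.sum_eq_zero
      intro q hq
      rcases hM q.1 q.2 with h | h
      · exact h
      · exact absurd h (Finset.mem_filter.mp hq).2
    rw [h1, h2, add_zero]
  set S : Finset (Fin m × Fin n) := T.filter (fun q => q.1 ∉ I ∨ q.2 ∉ J) with hS
  have hsub : T \ S ⊆ I ×ˢ J := by
    intro q hq
    rw [Finset.mem_sdiff] at hq
    obtain ⟨hqT, hqS⟩ := hq
    rw [hS, Finset.mem_filter] at hqS
    push_neg at hqS
    obtain ⟨h1, h2⟩ := hqS hqT
    exact Finset.mem_product.mpr ⟨h1, h2⟩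
  have hcards : (T \ S).card + S.card = T.card :=
    Finset.card_sdiff_add_card_eq_card (Finset.filter_subset _ _)
  have hTS : (T \ S).card ≤ Estar := by
    refine le_trans (Finset.card_le_card hsub) ?_
    rw [Finset.card_product]
    exact hcard
  have hpS : p ≤ (S.card : ℝ) := by
    rw [hp, hE']
    have h1 : (T.card : ℝ) ≤ (S.card : ℝ) + (Estar : ℝ) := by
      exact_mod_cast hcards ▸ (by omega : (T \ S).card + S.card ≤ S.card + Estar)
    linarith
  have hkey : ∀ q ∈ S, (1 - c) ^ 2 ≤ W q.1 q.2 * (M q.1 q.2 - u q.1 * v q.2) ^ 2 := by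
    intro q hq
    rw [hS, Finset.mem_filter, hT, Finset.mem_filter] at hq
    obtain ⟨⟨-, hM1⟩, hout⟩ := hq
    have huv : |u q.1 * v q.2| ≤ c := by
      rcases hout with h | h
      · simp only [hI, Finset.mem_filter, Finset.mem_univ, true_and, not_exists, not_lt] at h
        exact h q.2
      · simp only [hJ, Finset.mem_filter, Finset.mem_univ, true_and, not_exists, not_lt] at h
        exact h q.1
    rw [hW1 _ _ hM1, hM1, one_mul]
    have h1 : u q.1 * v q.2 ≤ c := le_trans (le_abs_self _) huv
    nlinarith [mul_nonneg (sub_nonneg.mpr h1)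
      (show (0:ℝ) ≤ 2 - c - u q.1 * v q.2 by linarith)]
  have hsum : (S.card : ℝ) * (1 - c) ^ 2 ≤ ∑ i, ∑ j, W i j * (M i j - u i * v j) ^ 2 := by
    rw [← Finset.sum_product', Finset.univ_product_univ]
    calc (S.card : ℝ) * (1 - c) ^ 2 = ∑ _q ∈ S, (1 - c) ^ 2 := by
          rw [Finset.sum_const, nsmul_eq_mul]
      _ ≤ ∑ q ∈ S, W q.1 q.2 * (M q.1 q.2 - u q.1 * v q.2) ^ 2 := Finset.sum_le_sum hkey
      _ ≤ ∑ q : Fin m × Fin n, W q.1 q.2 * (M q.1 q.2 - u q.1 * v q.2) ^ 2 :=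
          Finset.sum_le_sum_of_subset_of_nonneg (Finset.subset_univ _)
            (fun q _ _ => mul_nonneg (hWpos _ _) (sq_nonneg _))
  have hlt : p * (1 - 2 * c) < p * (1 - c) ^ 2 := by nlinarith [mul_pos hppos (mul_pos hc0 hc0)]
  have h2 : p * (1 - c) ^ 2 ≤ (S.card : ℝ) * (1 - c) ^ 2 :=
    mul_le_mul_of_nonneg_right hpS (sq_nonneg _)
  linarith
end

section
/- Let M ∈ {0,1}^{m×n} be a biadjacency matrix with |E| ≥ 1 ones and maximum biclique size |E*|, and let W_{ij} = 1 if M_{ij} = 1 and W_{ij} = d if M_{ij} = 0. For any 0 < ε ≤ 1 and any d ≥ 2⁶|E|⁶/ε⁴, the optimal value p* = min_{u∈ℝ^m, v∈ℝ^n} ‖M − uv^T‖_W² satisfies |E| − |E*| − ε < p* ≤ |E| − |E*|. -/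
set_option maxHeartbeats 1000000 in
theorem stmt_9 {m n : ℕ} (M W : Matrix (Fin m) (Fin n) ℝ) (d : ℝ)
    (hM : ∀ i j, M i j = 0 ∨ M i j = 1)
    (hW : ∀ i j, W i j = if M i j = 1 then 1 else d)
    (E : ℝ) (hE : E = ∑ i, ∑ j, M i j) (hE1 : 1 ≤ E)
    (Estar : ℕ)
    (hEstar_ex : ∃ (I : Finset (Fin m)) (J : Finset (Fin n)),
      IsBiclique M I J ∧ I.card * J.card = Estar)
    (hEstar_max : ∀ (I : Finset (Fin m)) (J : Finset (Fin n)),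
      IsBiclique M I J → I.card * J.card ≤ Estar)
    (ε : ℝ) (hε0 : 0 < ε) (hε1 : ε ≤ 1) (hd : 2 ^ 6 * E ^ 6 / ε ^ 4 ≤ d) :
    E - Estar - ε <
        sInf {e : ℝ | ∃ (u : Fin m → ℝ) (v : Fin n → ℝ),
          e = ∑ i, ∑ j, W i j * (M i j - u i * v j) ^ 2} ∧
      sInf {e : ℝ | ∃ (u : Fin m → ℝ) (v : Fin n → ℝ),
          e = ∑ i, ∑ j, W i j * (M i j - u i * v j) ^ 2} ≤ E - Estar := by
  have hE0 : (0:ℝ) < E := lt_of_lt_of_le one_pos hE1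
  have hdpos : (0:ℝ) < d := lt_of_lt_of_le (by positivity) hd
  have hdε : 64 * E ^ 6 ≤ d * ε ^ 4 := by
    have h := (div_le_iff₀ (by positivity : (0:ℝ) < ε ^ 4)).mp hd
    linarith
  have hd1 : (1:ℝ) ≤ d := by nlinarith [pow_le_one₀ hε0.le hε1 (n := 4), one_le_pow₀ hE1 (n := 6)]
  have hWnn : ∀ i j, 0 ≤ W i j := by
    intro i j; rw [hW]; split
    · norm_num
    · exact hdpos.le
  have hMnn : ∀ i j, (0:ℝ) ≤ M i j := by
    intro i j; rcases hM i j with h | h <;> rw [h] <;> norm_num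
  -- Estar ≥ 1
  have hone : ∃ i j, M i j = 1 := by
    by_contra h
    push_neg at h
    have hz : ∀ i j, M i j = 0 := fun i j => (hM i j).resolve_right (h i j)
    rw [hE] at hE1
    simp [hz] at hE1
    linarith
  have hEstar1 : 1 ≤ Estar := by
    obtain ⟨i, j, hij⟩ := hone
    have := hEstar_max {i} {j} (by
      intro a ha b hb
      simp only [Finset.mem_singleton] at ha hb
      subst ha; subst hb; exact hij)
    simpa using this
  have hEstar1' : (1:ℝ) ≤ (Estar:ℝ) := by exact_mod_cast hEstar1
  -- Estar ≤ E
  have hEstarE : (Estar:ℝ) ≤ E := by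
    obtain ⟨I, J, hbi, hcard⟩ := hEstar_ex
    have h1 : (Estar:ℝ) = ∑ i ∈ I, ∑ j ∈ J, M i j := by
      rw [← hcard]
      push_cast
      rw [Finset.sum_congr rfl fun i hi => Finset.sum_congr rfl fun j _hj => hbi i hi j _hj]
      simp [mul_comm]
    have step1 : ∀ i, ∑ j ∈ J, M i j ≤ ∑ j, M i j := fun i =>
      Finset.sum_le_sum_of_subset_of_nonneg (Finset.subset_univ J) (fun j _ _ => hMnn i j)
    rw [h1, hE]
    calc ∑ i ∈ I, ∑ j ∈ J, M i j ≤ ∑ i ∈ I, ∑ j, M i j :=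
          Finset.sum_le_sum (fun i _ => step1 i)
      _ ≤ ∑ i, ∑ j, M i j :=
          Finset.sum_le_sum_of_subset_of_nonneg (Finset.subset_univ I)
            (fun i _ _ => Finset.sum_nonneg fun j _ => hMnn i j)
  -- membership: E - Estar is attained by the indicator vectors of a maximum biclique
  have hmem : (E - (Estar:ℝ)) ∈ {e : ℝ | ∃ (u : Fin m → ℝ) (v : Fin n → ℝ),
      e = ∑ i, ∑ j, W i j * (M i j - u i * v j) ^ 2} := by
    obtain ⟨I, J, hbi, hcard⟩ := hEstar_ex
    refine ⟨fun i => if i ∈ I then 1 else 0, fun j => if j ∈ J then 1 else 0, ?_⟩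
    have hterm : ∀ i j, W i j * (M i j - (if i ∈ I then (1:ℝ) else 0) * (if j ∈ J then (1:ℝ) else 0)) ^ 2
        = M i j - (if i ∈ I then (1:ℝ) else 0) * (if j ∈ J then (1:ℝ) else 0) := by
      intro i j
      by_cases hi : i ∈ I <;> by_cases hj : j ∈ J
      · have h1 := hbi i hi j hj
        simp [hW, h1, hi, hj]
      all_goals rcases hM i j with h | h <;> simp [hW, h, hi, hj]
    rw [Finset.sum_congr rfl fun i _ => Finset.sum_congr rfl fun j _ => hterm i j]
    have hsplit : ∑ i, ∑ j, (M i j - (if i ∈ I then (1:ℝ) else 0) * (if j ∈ J then (1:ℝ) else 0))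
        = (∑ i, ∑ j, M i j) - ∑ i, ∑ j, (if i ∈ I then (1:ℝ) else 0) * (if j ∈ J then (1:ℝ) else 0) := by
      rw [← Finset.sum_sub_distrib]
      exact Finset.sum_congr rfl fun i _ => by rw [← Finset.sum_sub_distrib]
    rw [hsplit, ← hE]
    have hprod : ∑ i, ∑ j, (if i ∈ I then (1:ℝ) else 0) * (if j ∈ J then (1:ℝ) else 0)
        = (I.card : ℝ) * (J.card : ℝ) := by
      rw [← Finset.sum_mul_sum]
      simp
    rw [hprod, ← hcard]
    push_cast
    ring
  -- the universal lower bound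
  set c : ℝ := E - (Estar:ℝ) - ε + ε / (2 * E) with hc
  have hclb : ∀ e ∈ {e : ℝ | ∃ (u : Fin m → ℝ) (v : Fin n → ℝ),
      e = ∑ i, ∑ j, W i j * (M i j - u i * v j) ^ 2}, c ≤ e := by
    rintro e ⟨u, v, rfl⟩
    set S := ∑ i, ∑ j, W i j * (M i j - u i * v j) ^ 2 with hSdef
    have hSprod : S = ∑ p ∈ Finset.univ ×ˢ Finset.univ,
        W p.1 p.2 * (M p.1 p.2 - u p.1 * v p.2) ^ 2 := by
      rw [Finset.sum_product]
    have htermnn : ∀ (p : Fin m × Fin n), 0 ≤ W p.1 p.2 * (M p.1 p.2 - u p.1 * v p.2) ^ 2 :=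
      fun p => mul_nonneg (hWnn _ _) (sq_nonneg _)
    have hS0 : 0 ≤ S := by
      rw [hSprod]; exact Finset.sum_nonneg fun p _ => htermnn p
    have hεE : ε / (2 * E) ≤ ε := by
      rw [div_le_iff₀ (by positivity)]
      nlinarith
    by_cases hcase : E - (Estar:ℝ) ≤ S
    · rw [hc]; linarith
    push_neg at hcase
    have hSE1 : S ≤ E - 1 := by linarith
    have hsingle : ∀ i j, W i j * (M i j - u i * v j) ^ 2 ≤ S := by
      intro i j
      rw [hSprod]
      exact Finset.single_le_sum (f := fun p : Fin m × Fin n =>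
        W p.1 p.2 * (M p.1 p.2 - u p.1 * v p.2) ^ 2) (fun p _ => htermnn p)
        (a := (i, j)) (Finset.mem_product.mpr ⟨Finset.mem_univ i, Finset.mem_univ j⟩)
    have hzero : ∀ i j, M i j = 0 → (u i * v j) ^ 2 ≤ (E - 1) / d := by
      intro i j h
      have h1 := hsingle i j
      rw [h, hW, h] at h1
      simp only [zero_sub, if_neg (by norm_num : (0:ℝ) ≠ 1)] at h1
      rw [le_div_iff₀ hdpos]
      nlinarith
    have honeB : ∀ i j, M i j = 1 → (1 - u i * v j) ^ 2 ≤ E - 1 := by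
      intro i j h
      have h1 := hsingle i j
      rw [h, hW, h] at h1
      norm_num at h1
      linarith
    set β : ℝ := ε / (2 * E) with hβ
    have hβpos : 0 < β := by positivity
    have hβhalf : β ≤ 1 / 2 := by
      rw [hβ, div_le_div_iff₀ (by positivity) (by norm_num)]
      nlinarith
    set T : Finset (Fin m × Fin n) :=
      (Finset.univ ×ˢ Finset.univ).filter
        (fun p : Fin m × Fin n => M p.1 p.2 = 1 ∧ β < u p.1 * v p.2) with hT
    set I : Finset (Fin m) := T.image Prod.fst with hI
    set J : Finset (Fin n) := T.image Prod.snd with hJ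
    have hbiclique : IsBiclique M I J := by
      intro i hi j hj
      obtain ⟨p, hp, hpi⟩ := Finset.mem_image.mp hi
      obtain ⟨q, hq, hqj⟩ := Finset.mem_image.mp hj
      rw [hT, Finset.mem_filter] at hp hq
      obtain ⟨-, hp1, hpβ⟩ := hp
      obtain ⟨-, hq1, hqβ⟩ := hq
      rw [hpi] at hpβ
      rw [hqj] at hqβ
      by_contra hMij
      have hMij0 : M i j = 0 := (hM i j).resolve_right hMij
      have h1 : (u i * v j) ^ 2 ≤ (E - 1) / d := hzero _ _ hMij0
      have ht2 : (u q.1 * v p.2) ^ 2 ≤ 2 * E := by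
        rcases hM q.1 p.2 with h0 | h0
        · have h2 := hzero _ _ h0
          have h3 : (E - 1) / d ≤ E - 1 := by
            apply div_le_self (by linarith) hd1
          linarith
        · have h2 := honeB _ _ h0
          nlinarith [sq_nonneg (u q.1 * v p.2 - 2)]
      have hAB : β * β < (u i * v p.2) * (u q.1 * v j) := by
        exact mul_lt_mul' hpβ.le hqβ hβpos.le (hβpos.trans hpβ)
      have hABsq : (β * β) ^ 2 < ((u i * v j) * (u q.1 * v p.2)) ^ 2 := by
        have hkey : (u i * v p.2) * (u q.1 * v j) = (u i * v j) * (u q.1 * v p.2) := by ring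
        rw [← hkey]
        have h0 : 0 ≤ β * β := by positivity
        nlinarith [hAB, h0, mul_self_nonneg ((u i * v p.2) * (u q.1 * v j) - β * β)]
      have hbound : ((u i * v j) * (u q.1 * v p.2)) ^ 2 ≤ (E - 1) / d * (2 * E) := by
        rw [mul_pow]
        exact mul_le_mul h1 ht2 (sq_nonneg _) (div_nonneg (by linarith) hdpos.le)
      -- now a contradiction with hdε
      have hfinal : d * (β * β) ^ 2 < 2 * E * (E - 1) := by
        calc d * (β * β) ^ 2 < d * ((E - 1) / d * (2 * E)) :=
              mul_lt_mul_of_pos_left (lt_of_lt_of_le hABsq hbound) hdpos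
          _ = 2 * E * (E - 1) := by field_simp
      have hβ4 : (β * β) ^ 2 * (16 * E ^ 4) = ε ^ 4 := by
        rw [hβ]; field_simp; ring
      have h6 : d * ε ^ 4 < 2 * E * (E - 1) * (16 * E ^ 4) := by
        calc d * ε ^ 4 = d * (β * β) ^ 2 * (16 * E ^ 4) := by rw [← hβ4]; ring
          _ < 2 * E * (E - 1) * (16 * E ^ 4) :=
              mul_lt_mul_of_pos_right hfinal (by positivity)
      nlinarith [h6, hdε, pow_pos hE0 5, pow_pos hE0 6, one_le_pow₀ hE1 (n := 5)]
    have hTcard : (T.card : ℝ) ≤ (Estar : ℝ) := by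
      have h1 : T ⊆ I ×ˢ J := fun p hp =>
        Finset.mem_product.mpr ⟨Finset.mem_image_of_mem _ hp, Finset.mem_image_of_mem _ hp⟩
      have h2 : T.card ≤ Estar := by
        calc T.card ≤ (I ×ˢ J).card := Finset.card_le_card h1
          _ = I.card * J.card := Finset.card_product I J
          _ ≤ Estar := hEstar_max I J hbiclique
      exact_mod_cast h2
    set ones : Finset (Fin m × Fin n) :=
      (Finset.univ ×ˢ Finset.univ).filter (fun p : Fin m × Fin n => M p.1 p.2 = 1) with hones
    have hTsub : T ⊆ ones := by
      intro p hp
      rw [hT, Finset.mem_filter] at hp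
      rw [hones, Finset.mem_filter]
      exact ⟨hp.1, hp.2.1⟩
    have honescard : (ones.card : ℝ) = E := by
      rw [hE, ← Finset.sum_product' (f := fun i j => M i j)]
      have h1 : ∀ p ∈ Finset.univ ×ˢ Finset.univ,
          M (p : Fin m × Fin n).1 p.2 = if M p.1 p.2 = 1 then (1:ℝ) else 0 := by
        intro p _
        rcases hM p.1 p.2 with h | h <;> simp [h]
      rw [Finset.sum_congr rfl h1, ← Finset.sum_filter]
      simp [hones]
    have hcard_sdiff : ((ones \ T).card : ℝ) = (ones.card : ℝ) - (T.card : ℝ) := by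
      rw [Finset.card_sdiff_of_subset hTsub]
      exact_mod_cast Nat.cast_sub (Finset.card_le_card hTsub)
    have hsum_lower : (1 - β) ^ 2 * ((ones \ T).card : ℝ) ≤ S := by
      have h1 : ∀ p ∈ ones \ T, (1 - β) ^ 2 ≤ W p.1 p.2 * (M p.1 p.2 - u p.1 * v p.2) ^ 2 := by
        intro p hp
        rw [Finset.mem_sdiff] at hp
        obtain ⟨hpo, hpt⟩ := hp
        rw [hones, Finset.mem_filter] at hpo
        have hM1 : M p.1 p.2 = 1 := hpo.2
        have huv : u p.1 * v p.2 ≤ β := by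
          by_contra hcon
          push_neg at hcon
          exact hpt (by rw [hT, Finset.mem_filter]; exact ⟨hpo.1, hM1, hcon⟩)
        rw [hM1, hW, hM1, if_pos rfl, one_mul]
        have h2 : 1 - β ≤ 1 - u p.1 * v p.2 := by linarith
        have h3 : 0 ≤ 1 - β := by linarith
        nlinarith
      calc (1 - β) ^ 2 * ((ones \ T).card : ℝ)
          = ∑ _p ∈ ones \ T, (1 - β) ^ 2 := by rw [Finset.sum_const, nsmul_eq_mul, mul_comm]
        _ ≤ ∑ p ∈ ones \ T, W p.1 p.2 * (M p.1 p.2 - u p.1 * v p.2) ^ 2 :=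
            Finset.sum_le_sum h1
        _ ≤ ∑ p ∈ Finset.univ ×ˢ Finset.univ, W p.1 p.2 * (M p.1 p.2 - u p.1 * v p.2) ^ 2 :=
            Finset.sum_le_sum_of_subset_of_nonneg
              (by rw [hones]; exact (Finset.sdiff_subset).trans (Finset.filter_subset _ _))
              (fun p _ _ => htermnn p)
        _ = S := hSprod.symm
    -- finish
    have hfin : (1 - β) ^ 2 * (E - (Estar:ℝ)) ≤ S := by
      have h1 : E - (Estar:ℝ) ≤ ((ones \ T).card : ℝ) := by
        rw [hcard_sdiff, honescard]
        linarith
      have h2 : (0:ℝ) ≤ (1 - β) ^ 2 := sq_nonneg _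
      nlinarith
    have h2β : (1 - 2 * β) * (E - (Estar:ℝ)) ≤ (1 - β) ^ 2 * (E - (Estar:ℝ)) := by
      have : 1 - 2 * β ≤ (1 - β) ^ 2 := by nlinarith [sq_nonneg β]
      nlinarith
    -- c ≤ (1 - 2β)(E - Estar)
    have hβE : 2 * β * E = ε := by
      rw [hβ]; field_simp
    rw [hc]
    have hgoal : E - (Estar:ℝ) - ε + ε / (2 * E) ≤ (1 - 2 * β) * (E - (Estar:ℝ)) := by
      have hβε : β = ε / (2 * E) := hβ
      have h3 : (1 - 2 * β) * (E - (Estar:ℝ)) = E - (Estar:ℝ) - 2 * β * (E - (Estar:ℝ)) := by ring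
      rw [h3]
      have h4 : 2 * β * (E - (Estar:ℝ)) ≤ 2 * β * (E - 1) := by nlinarith
      have h5 : 2 * β * (E - 1) = ε - 2 * β := by nlinarith
      have h6 : ε / (2 * E) = β := hβ.symm
      rw [h6]
      linarith
    linarith
  -- assemble
  have hne : Set.Nonempty {e : ℝ | ∃ (u : Fin m → ℝ) (v : Fin n → ℝ),
      e = ∑ i, ∑ j, W i j * (M i j - u i * v j) ^ 2} := ⟨_, hmem⟩
  have hbdd : BddBelow {e : ℝ | ∃ (u : Fin m → ℝ) (v : Fin n → ℝ),
      e = ∑ i, ∑ j, W i j * (M i j - u i * v j) ^ 2} := ⟨c, fun e he => hclb e he⟩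
  constructor
  · have h1 : E - (Estar:ℝ) - ε < c := by
      rw [hc]
      have : 0 < ε / (2 * E) := by positivity
      linarith
    exact lt_of_lt_of_le h1 (le_csInf hne hclb)
  · exact csInf_le hbdd hmem
end

section
/- Let M ∈ {0,1}^{m×n} be a biadjacency matrix with |E| ones and maximum biclique size |E*|, with |E| > |E*|. If p* = min_{u,v} ‖M − uv^T‖_W² (where W_{ij} = 1 on ones of M and W_{ij} = d ≥ (2|E|)⁶ on zeros of M) is known, then |E*| = |E| − ⌈p*⌉. -/
set_option maxHeartbeats 1000000 in
theorem stmt_10 {m n : ℕ} (M W : Matrix (Fin m) (Fin n) ℝ) (d : ℝ)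
    (hM : ∀ i j, M i j = 0 ∨ M i j = 1)
    (hW : ∀ i j, W i j = if M i j = 1 then 1 else d)
    (E : ℕ) (hE : (E : ℝ) = ∑ i, ∑ j, M i j)
    (Estar : ℕ)
    (hEstar_ex : ∃ (I : Finset (Fin m)) (J : Finset (Fin n)),
      IsBiclique M I J ∧ I.card * J.card = Estar)
    (hEstar_max : ∀ (I : Finset (Fin m)) (J : Finset (Fin n)),
      IsBiclique M I J → I.card * J.card ≤ Estar)
    (hEE : Estar < E) (hd : ((2 * E : ℕ) : ℝ) ^ 6 ≤ d)
    (pstar : ℝ)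
    (hpstar : IsLeast {e : ℝ | ∃ (u : Fin m → ℝ) (v : Fin n → ℝ),
      e = ∑ i, ∑ j, W i j * (M i j - u i * v j) ^ 2} pstar) :
    (Estar : ℤ) = (E : ℤ) - ⌈pstar⌉ := by
  classical
  push_cast at hd
  have hd64 : 64 * (E : ℝ) ^ 6 ≤ d := by nlinarith [hd]
  have hE1 : 1 ≤ E := Nat.one_le_iff_ne_zero.mpr (by omega)
  -- there is a 1 entry
  have hexists1 : ∃ i j, M i j = 1 := by
    by_contra hcon
    push_neg at hcon
    have hall0 : ∀ i j, M i j = 0 := by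
      intro i j; rcases hM i j with h | h
      · exact h
      · exact absurd h (hcon i j)
    have : (E : ℝ) = 0 := by
      rw [hE]; simp [hall0]
    have : E = 0 := by exact_mod_cast this
    omega
  have hEstar1 : 1 ≤ Estar := by
    obtain ⟨i0, j0, h1⟩ := hexists1
    have hb : IsBiclique M {i0} {j0} := by
      intro i hi j hj
      simp only [Finset.mem_singleton] at hi hj
      rw [hi, hj]; exact h1
    have := hEstar_max {i0} {j0} hb
    simpa using this
  have hE2 : 2 ≤ E := by omega
  have hE2R : (2 : ℝ) ≤ (E : ℝ) := by exact_mod_cast hE2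
  have hEposR : (0 : ℝ) < (E : ℝ) := by linarith
  have hd0 : (0 : ℝ) ≤ d := by nlinarith [pow_nonneg (le_of_lt hEposR) 6]
  -- the set of ones
  set ones : Finset (Fin m × Fin n) :=
    Finset.univ.filter (fun p => M p.1 p.2 = 1) with hones_def
  have honescard : (E : ℝ) = (ones.card : ℝ) := by
    calc (E : ℝ) = ∑ i, ∑ j, M i j := hE
    _ = ∑ p : Fin m × Fin n, M p.1 p.2 := (Fintype.sum_prod_type' (f := fun i j => M i j)).symm
    _ = ∑ p : Fin m × Fin n, (if M p.1 p.2 = 1 then (1 : ℝ) else 0) := by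
        apply Finset.sum_congr rfl
        intro p _
        rcases hM p.1 p.2 with h | h <;> simp [h]
    _ = (ones.card : ℝ) := by
        rw [Finset.sum_boole]
  have honescardN : ones.card = E := by exact_mod_cast honescard.symm
  -- Upper bound : pstar ≤ E - Estar
  have hub : pstar ≤ (E : ℝ) - (Estar : ℝ) := by
    obtain ⟨I, J, hbi, hIJ⟩ := hEstar_ex
    apply hpstar.2
    refine ⟨(fun i => if i ∈ I then 1 else 0), (fun j => if j ∈ J then 1 else 0), ?_⟩
    have hterm : ∀ i j, W i j *
        (M i j - (if i ∈ I then (1:ℝ) else 0) * (if j ∈ J then (1:ℝ) else 0)) ^ 2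
        = M i j - (if i ∈ I ∧ j ∈ J then (1:ℝ) else 0) := by
      intro i j
      by_cases hi : i ∈ I <;> by_cases hj : j ∈ J
      · have h1 : M i j = 1 := hbi i hi j hj
        simp [hW, h1, hi, hj]
      all_goals rcases hM i j with h | h <;> simp [hW, h, hi, hj]
    have hsum2 : ∑ i, ∑ j, (if i ∈ I ∧ j ∈ J then (1:ℝ) else 0)
        = (I.card : ℝ) * (J.card : ℝ) := by
      have hrow : ∀ i, ∑ j, (if i ∈ I ∧ j ∈ J then (1:ℝ) else 0)
          = if i ∈ I then (J.card : ℝ) else 0 := by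
        intro i
        by_cases hi : i ∈ I
        · simp only [hi, true_and, if_true]
          rw [Finset.sum_ite_mem, Finset.univ_inter, Finset.sum_const,
            nsmul_eq_mul, mul_one]
        · simp [hi]
      rw [Finset.sum_congr rfl (fun i _ => hrow i), Finset.sum_ite_mem,
        Finset.univ_inter, Finset.sum_const, nsmul_eq_mul]
    calc (E : ℝ) - (Estar : ℝ)
        = ∑ i, ∑ j, M i j - (I.card : ℝ) * (J.card : ℝ) := by
          rw [← hE]
          congr 1
          exact_mod_cast congrArg (fun k : ℕ => (k : ℝ)) hIJ.symm
    _ = ∑ i, ∑ j, (M i j - (if i ∈ I ∧ j ∈ J then (1:ℝ) else 0)) := by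
          rw [← hsum2, ← Finset.sum_sub_distrib]
          apply Finset.sum_congr rfl
          intro i _
          rw [← Finset.sum_sub_distrib]
    _ = ∑ i, ∑ j, W i j *
        (M i j - (if i ∈ I then (1:ℝ) else 0) * (if j ∈ J then (1:ℝ) else 0)) ^ 2 := by
          apply Finset.sum_congr rfl; intro i _
          apply Finset.sum_congr rfl; intro j _
          exact (hterm i j).symm
  -- Lower bound : E - Estar - 1 < pstar
  have hlb : (E : ℝ) - (Estar : ℝ) - 1 < pstar := by
    by_contra hcon
    push_neg at hcon
    -- hcon : pstar ≤ E - Estar - 1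
    obtain ⟨u, v, hueq⟩ := hpstar.1
    set f : Fin m × Fin n → ℝ :=
      fun p => W p.1 p.2 * (M p.1 p.2 - u p.1 * v p.2) ^ 2 with hf_def
    have hesum : pstar = ∑ p : Fin m × Fin n, f p := by
      rw [hueq]
      exact (Fintype.sum_prod_type' (f := fun i j => W i j * (M i j - u i * v j) ^ 2)).symm
    have hWnn : ∀ i j, 0 ≤ W i j := by
      intro i j; rw [hW]; split
      · norm_num
      · exact hd0
    have hf0 : ∀ p : Fin m × Fin n, 0 ≤ f p := fun p =>
      mul_nonneg (hWnn _ _) (sq_nonneg _)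
    have hsingle : ∀ p : Fin m × Fin n, f p ≤ pstar := by
      intro p
      rw [hesum]
      exact Finset.single_le_sum (fun q _ => hf0 q) (Finset.mem_univ p)
    have hpE : pstar ≤ (E : ℝ) := by
      have : (Estar : ℝ) ≥ 1 := by exact_mod_cast hEstar1
      linarith
    -- zeros bound
    have hz : ∀ i j, M i j = 0 → 64 * (E : ℝ) ^ 5 * (u i * v j) ^ 2 ≤ 1 := by
      intro i j h0
      have h1 : d * (u i * v j) ^ 2 ≤ pstar := by
        have hs := hsingle (i, j)
        have hfij : f (i, j) = d * (u i * v j) ^ 2 := by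
          simp only [hf_def]
          rw [hW, if_neg (by rw [h0]; norm_num), h0]
          ring
        rw [hfij] at hs
        exact hs
      have hq : (0:ℝ) ≤ (u i * v j) ^ 2 := sq_nonneg _
      nlinarith [mul_le_mul_of_nonneg_right hd64 hq]
    -- ones bound
    have hone : ∀ i j, M i j = 1 → (1 - u i * v j) ^ 2 ≤ pstar := by
      intro i j h1
      have hs := hsingle (i, j)
      have hfij : f (i, j) = (1 - u i * v j) ^ 2 := by
        simp only [hf_def]
        rw [hW, if_pos h1, h1]
        ring
      rw [hfij] at hs
      exact hs
    -- threshold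
    set a : ℝ := 1 / (2 * (E : ℝ)) with ha_def
    have ha0 : 0 < a := by positivity
    have haE : a * (2 * (E : ℝ)) = 1 := by
      rw [ha_def]
      field_simp
    have ha4 : a ^ 4 * (16 * (E : ℝ) ^ 4) = 1 := by
      calc a ^ 4 * (16 * (E : ℝ) ^ 4) = (a * (2 * (E : ℝ))) ^ 4 := by ring
      _ = 1 := by rw [haE]; norm_num
    set T : Finset (Fin m × Fin n) :=
      ones.filter (fun p => a < u p.1 * v p.2 ∧ u p.1 * v p.2 < 2 - a) with hT_def
    -- biclique from T
    have hbic : IsBiclique M (T.image Prod.fst) (T.image Prod.snd) := by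
      intro i hi l hl
      obtain ⟨p, hp, hpi⟩ := Finset.mem_image.mp hi
      obtain ⟨q, hq, hql⟩ := Finset.mem_image.mp hl
      rw [hT_def, Finset.mem_filter] at hp hq
      have hMp : M p.1 p.2 = 1 := by
        have := hp.1; rw [hones_def, Finset.mem_filter] at this; exact this.2
      have hMq : M q.1 q.2 = 1 := by
        have := hq.1; rw [hones_def, Finset.mem_filter] at this; exact this.2
      obtain ⟨hx1, hx2⟩ := hp.2
      obtain ⟨hy1, hy2⟩ := hq.2
      rw [hpi] at hx1 hx2 hMp
      rw [hql] at hy1 hy2 hMq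
      set j : Fin n := p.2
      set k : Fin m := q.1
      rcases hM i l with h0 | h1
      swap
      · exact h1
      exfalso
      have hzil : 64 * (E : ℝ) ^ 5 * (u i * v l) ^ 2 ≤ 1 := hz i l h0
      have hprod : a ^ 2 < (u i * v j) * (u k * v l) := by
        nlinarith [mul_pos (sub_pos.mpr hx1) (sub_pos.mpr hy1)]
      have hst : a ^ 4 < (u i * v l) ^ 2 * (u k * v j) ^ 2 := by
        have hkey : (u i * v l) ^ 2 * (u k * v j) ^ 2
            = ((u i * v j) * (u k * v l)) ^ 2 := by ring
        rw [hkey]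
        calc a ^ 4 = (a ^ 2) ^ 2 := by ring
        _ < ((u i * v j) * (u k * v l)) ^ 2 := by
            apply pow_lt_pow_left₀ hprod (by positivity) (by norm_num)
      set s : ℝ := (u i * v l) ^ 2
      set t : ℝ := (u k * v j) ^ 2
      have hs0 : 0 ≤ s := sq_nonneg _
      have ht0 : 0 ≤ t := sq_nonneg _
      have hkj2 : 4 * (E : ℝ) ≤ t := by
        have h1' : 64 * (E : ℝ) ^ 5 * (s * t) ≤ t := by
          nlinarith [mul_nonneg ht0 (sub_nonneg.mpr hzil)]
        have hEp5 : (0 : ℝ) < 64 * (E : ℝ) ^ 5 := by positivity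
        have h2' : 64 * (E : ℝ) ^ 5 * a ^ 4 < 64 * (E : ℝ) ^ 5 * (s * t) :=
          mul_lt_mul_of_pos_left hst hEp5
        have h3' : 64 * (E : ℝ) ^ 5 * a ^ 4 = 4 * (E : ℝ) := by
          calc 64 * (E : ℝ) ^ 5 * a ^ 4
              = 4 * (E : ℝ) * (a ^ 4 * (16 * (E : ℝ) ^ 4)) := by ring
          _ = 4 * (E : ℝ) := by rw [ha4]; ring
        linarith
      have hkj2' : 4 * (E : ℝ) ≤ (u k * v j) ^ 2 := hkj2
      have hMkj : M k j = 1 := by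
        rcases hM k j with h | h
        · exfalso
          have hthis := hz k j h
          have hE5 : (1 : ℝ) ≤ (E : ℝ) ^ 5 := one_le_pow₀ (by linarith : (1:ℝ) ≤ (E:ℝ))
          have h8 : (8 : ℝ) ≤ (u k * v j) ^ 2 := by linarith
          have hmul : (1 : ℝ) * 8 ≤ (E : ℝ) ^ 5 * (u k * v j) ^ 2 :=
            mul_le_mul hE5 h8 (by norm_num) (by positivity)
          nlinarith [hmul, hthis]
        · exact h
      have hcontr := hone k j hMkj
      -- (1 - x)^2 ≤ pstar ≤ E - 2, but x^2 ≥ 4E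
      have hpE2 : pstar ≤ (E : ℝ) - 2 := by
        have : (Estar : ℝ) ≥ 1 := by exact_mod_cast hEstar1
        linarith
      nlinarith [sq_nonneg (u k * v j - 4 / 3), hkj2', hcontr, hpE2]
    -- |T| ≤ Estar
    have hTcard : T.card ≤ Estar := by
      have hsub : T ⊆ (T.image Prod.fst) ×ˢ (T.image Prod.snd) := by
        intro p hp
        rw [Finset.mem_product]
        exact ⟨Finset.mem_image_of_mem _ hp, Finset.mem_image_of_mem _ hp⟩
      calc T.card ≤ ((T.image Prod.fst) ×ˢ (T.image Prod.snd)).card :=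
            Finset.card_le_card hsub
      _ = (T.image Prod.fst).card * (T.image Prod.snd).card := Finset.card_product _ _
      _ ≤ Estar := hEstar_max _ _ hbic
    -- count of uncovered ones
    have hTsub : T ⊆ ones := Finset.filter_subset _ _
    have hterm_lb : ∀ p ∈ ones \ T, (1 - a) ^ 2 ≤ f p := by
      intro p hp
      rw [Finset.mem_sdiff] at hp
      have hMp : M p.1 p.2 = 1 := by
        have := hp.1; rw [hones_def, Finset.mem_filter] at this; exact this.2
      have hnotT : ¬(a < u p.1 * v p.2 ∧ u p.1 * v p.2 < 2 - a) := by
        intro hcontra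
        exact hp.2 (by rw [hT_def, Finset.mem_filter]; exact ⟨hp.1, hcontra⟩)
      have hfp : f p = (1 - u p.1 * v p.2) ^ 2 := by
        simp only [hf_def]
        rw [hW]
        simp [hMp]
      rw [hfp]
      have ha1 : a ≤ 1 / 4 := by
        rw [ha_def]
        rw [div_le_div_iff₀ (by linarith) (by norm_num)]
        linarith
      rcases not_and_or.mp hnotT with h | h
      · push_neg at h
        nlinarith
      · push_neg at h
        nlinarith
    have hcount : ((ones \ T).card : ℝ) * (1 - a) ^ 2 ≤ pstar := by
      have h1 : ∑ p ∈ ones \ T, ((1 - a) ^ 2) ≤ ∑ p ∈ ones \ T, f p :=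
        Finset.sum_le_sum hterm_lb
      have h2 : ∑ p ∈ ones \ T, f p ≤ pstar := by
        rw [hesum]
        exact Finset.sum_le_sum_of_subset_of_nonneg (Finset.subset_univ _)
          (fun q _ _ => hf0 q)
      calc ((ones \ T).card : ℝ) * (1 - a) ^ 2
          = ∑ _p ∈ ones \ T, ((1 - a) ^ 2) := by
            rw [Finset.sum_const, nsmul_eq_mul]
      _ ≤ pstar := le_trans h1 h2
    have hsdcard : (ones \ T).card = ones.card - T.card := Finset.card_sdiff_of_subset hTsub
    have hTE : T.card ≤ E := le_trans hTcard (le_of_lt hEE)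
    have hcast : ((ones \ T).card : ℝ) = (E : ℝ) - (T.card : ℝ) := by
      rw [hsdcard, honescardN, Nat.cast_sub hTE]
    have hTcardR : (T.card : ℝ) ≤ (Estar : ℝ) := by exact_mod_cast hTcard
    have hlow : ((E : ℝ) - (Estar : ℝ)) * (1 - a) ^ 2 ≤ pstar := by
      have hmono : ((E : ℝ) - (Estar : ℝ)) * (1 - a) ^ 2
          ≤ ((E : ℝ) - (T.card : ℝ)) * (1 - a) ^ 2 := by
        apply mul_le_mul_of_nonneg_right _ (sq_nonneg _)
        linarith
      rw [← hcast] at hmono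
      linarith [hcount]
    -- final arithmetic contradiction
    have hc1 : (1 : ℝ) ≤ (E : ℝ) - (Estar : ℝ) := by
      have : (Estar : ℝ) + 1 ≤ (E : ℝ) := by exact_mod_cast hEE
      linarith
    have hc2 : (E : ℝ) - (Estar : ℝ) ≤ (E : ℝ) - 1 := by
      have : (1 : ℝ) ≤ (Estar : ℝ) := by exact_mod_cast hEstar1
      linarith
    -- c (1-a)^2 > c - 1  where c = E - Estar
    set c : ℝ := (E : ℝ) - (Estar : ℝ)
    have hkey : c - 1 < c * (1 - a) ^ 2 := by
      nlinarith [mul_pos ha0 ha0, sq_nonneg a,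
        mul_le_mul_of_nonneg_left hc2 (le_of_lt (mul_pos (by norm_num : (0:ℝ) < 2) ha0)),
        mul_nonneg (mul_nonneg (le_of_lt ha0) (le_of_lt ha0)) (by linarith : (0:ℝ) ≤ c)]
    linarith
  -- conclude ceiling
  have h1 : ⌈pstar⌉ ≤ (E : ℤ) - (Estar : ℤ) := by
    apply Int.ceil_le.mpr
    push_cast
    linarith
  have h2 : (E : ℤ) - (Estar : ℤ) - 1 < ⌈pstar⌉ := by
    apply Int.lt_ceil.mpr
    push_cast
    linarith
  omega
end

section
/- For a binary matrix M ∈ {0,1}^{m×n}, the optimal value of the maximum-edge biclique program min over binary u ∈ {0,1}^m, v ∈ {0,1}^n with u_i v_j ≤ M_{ij} for all (i,j) of ‖M − uv^T‖_F² equals |E| − |E*|, where |E| = Σ_{ij} M_{ij} and |E*| is the maximum of |I|·|J| over pairs of sets I ⊆ {1,…,m}, J ⊆ {1,…,n} with M_{ij} = 1 for all i ∈ I, j ∈ J. -/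
lemma binsum {k : ℕ} (u : Fin k → ℝ) (hu : ∀ i, u i = 0 ∨ u i = 1) :
    ∑ i, u i = (Finset.univ.filter (fun i => u i = 1)).card := by
  rw [← Finset.sum_filter_add_sum_filter_not Finset.univ (fun i => u i = 1)]
  have h1 : ∑ i ∈ Finset.univ.filter (fun i => u i = 1), u i
      = (Finset.univ.filter (fun i => u i = 1)).card := by
    rw [Finset.sum_congr rfl (fun i hi => (Finset.mem_filter.mp hi).2)]
    simp
  have h2 : ∑ i ∈ Finset.univ.filter (fun i => ¬ u i = 1), u i = 0 := by
    apply Finset.sum_eq_zero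
    intro i hi
    rcases hu i with h | h
    · exact h
    · exact absurd h (Finset.mem_filter.mp hi).2
  rw [h1, h2, add_zero]

lemma key {m n : ℕ} (M : Matrix (Fin m) (Fin n) ℝ)
    (hM : ∀ i j, M i j = 0 ∨ M i j = 1)
    (u : Fin m → ℝ) (v : Fin n → ℝ)
    (hu : ∀ i, u i = 0 ∨ u i = 1) (hv : ∀ j, v j = 0 ∨ v j = 1)
    (huv : ∀ i j, u i * v j ≤ M i j) :
    ∑ i, ∑ j, (M i j - u i * v j) ^ 2 =
      (∑ i, ∑ j, M i j) -
        ((Finset.univ.filter (fun i => u i = 1)).card : ℝ) *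
          ((Finset.univ.filter (fun j => v j = 1)).card : ℝ) := by
  have hterm : ∀ i j, (M i j - u i * v j) ^ 2 = M i j - u i * v j := by
    intro i j
    have h := huv i j
    rcases hu i with h1 | h1 <;> rcases hv j with h2 | h2 <;>
      rcases hM i j with h3 | h3 <;> rw [h1, h2, h3] at h ⊢ <;> linarith
  calc ∑ i, ∑ j, (M i j - u i * v j) ^ 2
      = ∑ i, ∑ j, (M i j - u i * v j) := by
        exact Finset.sum_congr rfl fun i _ =>
          Finset.sum_congr rfl fun j _ => hterm i j
    _ = (∑ i, ∑ j, M i j) - (∑ i, u i) * (∑ j, v j) := by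
        rw [Finset.sum_mul_sum]
        rw [← Finset.sum_sub_distrib]
        exact Finset.sum_congr rfl fun i _ => by rw [← Finset.sum_sub_distrib]
    _ = _ := by rw [binsum u hu, binsum v hv]

theorem stmt_16 {m n : ℕ} (M : Matrix (Fin m) (Fin n) ℝ)
    (hM : ∀ i j, M i j = 0 ∨ M i j = 1)
    (E : ℝ) (hE : E = ∑ i, ∑ j, M i j)
    (Estar : ℕ)
    (hEstar_ex : ∃ (I : Finset (Fin m)) (J : Finset (Fin n)),
      IsBiclique M I J ∧ I.card * J.card = Estar)
    (hEstar_max : ∀ (I : Finset (Fin m)) (J : Finset (Fin n)),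
      IsBiclique M I J → I.card * J.card ≤ Estar) :
    IsLeast {x : ℝ | ∃ (u : Fin m → ℝ) (v : Fin n → ℝ),
        (∀ i, u i = 0 ∨ u i = 1) ∧ (∀ j, v j = 0 ∨ v j = 1) ∧
        (∀ i j, u i * v j ≤ M i j) ∧
        x = ∑ i, ∑ j, (M i j - u i * v j) ^ 2}
      (E - Estar) := by
  constructor
  · obtain ⟨I, J, hbic, hcard⟩ := hEstar_ex
    refine ⟨fun i => if i ∈ I then 1 else 0, fun j => if j ∈ J then 1 else 0,
      fun i => by by_cases h : i ∈ I <;> simp [h], fun j => by by_cases h : j ∈ J <;> simp [h], ?_, ?_⟩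
    · intro i j
      by_cases hi : i ∈ I <;> by_cases hj : j ∈ J <;> simp [hi, hj]
      · exact le_of_eq (hbic i hi j hj).symm
      all_goals rcases hM i j with h | h <;> rw [h] <;> norm_num
    · rw [key M hM _ _ (fun i => by by_cases h : i ∈ I <;> simp [h]) (fun j => by by_cases h : j ∈ J <;> simp [h])]
      · have hI : Finset.univ.filter (fun i => (if i ∈ I then (1:ℝ) else 0) = 1) = I := by
          ext i; by_cases hi : i ∈ I <;> simp [hi]
        have hJ : Finset.univ.filter (fun j => (if j ∈ J then (1:ℝ) else 0) = 1) = J := by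
          ext j; by_cases hj : j ∈ J <;> simp [hj]
        rw [hI, hJ, hE, ← hcard]
        push_cast
        ring
      · intro i j
        by_cases hi : i ∈ I <;> by_cases hj : j ∈ J <;> simp [hi, hj]
        · exact le_of_eq (hbic i hi j hj).symm
        all_goals rcases hM i j with h | h <;> rw [h] <;> norm_num
  · rintro x ⟨u, v, hu, hv, huv, hx⟩
    rw [hx, key M hM u v hu hv huv, hE]
    have hbic : IsBiclique M (Finset.univ.filter (fun i => u i = 1))
        (Finset.univ.filter (fun j => v j = 1)) := by
      intro i hi j hj
      have h := huv i j
      rw [(Finset.mem_filter.mp hi).2, (Finset.mem_filter.mp hj).2, one_mul] at h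
      rcases hM i j with h3 | h3
      · rw [h3] at h; linarith
      · exact h3
    have := hEstar_max _ _ hbic
    have : ((Finset.univ.filter (fun i => u i = 1)).card *
        (Finset.univ.filter (fun j => v j = 1)).card : ℝ) ≤ (Estar : ℝ) := by
      exact_mod_cast this
    push_cast at this ⊢
    linarith
end
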